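/- Every double coset G·M·A, where G = GL_3(Z_p), M ∈ Mat(3,Z_p) ∩ GL_3(Q_p) spans an ideal of the Heisenberg Lie algebra L_p, and A = Aut(L_p) as a matrix group, contains a matrix of the form: upper triangular with diagonal (p^{e1+e2+e3}, p^{e2+e3}, p^{e3}), (1,2)-entry 0, (1,3)-entry p^{e4}, (2,3)-entry p^{e5}, where e1,...,e5 ∈ ℕ_0 satisfy e4 ≤ e3, e5 ≤ e3, and e5 ≤ e4 ≤ e5 + e1. -/

import Mathlib

/-- Heisenberg Lie bracket over ℤ_[p] in coordinates w.r.t. (x,y,z), [x,y] = z. -/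
noncomputable def hbr {p : ℕ} [Fact p.Prime] (u v : Fin 3 → ℤ_[p]) : Fin 3 → ℤ_[p] :=
  fun i => if i = 2 then u 0 * v 1 - u 1 * v 0 else 0

/-- Aut(L_p) = {(α, *; 0, det α) : α ∈ GL_2(ℤ_p)} as a set of matrices. -/
def AutSet (p : ℕ) [Fact p.Prime] : Set (Matrix (Fin 3) (Fin 3) ℤ_[p]) :=
  {B | ∃ (α : Matrix (Fin 2) (Fin 2) ℤ_[p]) (v13 v23 : ℤ_[p]), IsUnit α.det ∧
    B = !![α 0 0, α 0 1, v13; α 1 0, α 1 1, v23; 0, 0, α.det]}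

open Matrix Submodule

namespace Stmt10

variable {p : ℕ} [Fact p.Prime]

lemma p_ne_zero : (p : ℤ_[p]) ≠ 0 :=
  Nat.cast_ne_zero.mpr (Fact.out : p.Prime).ne_zero

lemma p_not_unit : ¬ IsUnit (p : ℤ_[p]) := PadicInt.irreducible_p.not_isUnit

lemma ppow_dvd_ppow_iff {m n : ℕ} : (p : ℤ_[p]) ^ m ∣ (p : ℤ_[p]) ^ n ↔ m ≤ n :=
  pow_dvd_pow_iff p_ne_zero p_not_unit

lemma ppow_ne_zero (n : ℕ) : (p : ℤ_[p]) ^ n ≠ 0 := pow_ne_zero _ p_ne_zero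

lemma exists_unit_pow {x : ℤ_[p]} (hx : x ≠ 0) :
    ∃ (u : ℤ_[p]) (k : ℕ), IsUnit u ∧ x = u * (p : ℤ_[p]) ^ k :=
  ⟨_, _, (PadicInt.unitCoeff hx).isUnit, PadicInt.unitCoeff_spec hx⟩

lemma le_of_ppow_dvd_unit_mul {a b : ℕ} {u : ℤ_[p]} (hu : IsUnit u)
    (h : (p : ℤ_[p]) ^ a ∣ u * (p : ℤ_[p]) ^ b) : a ≤ b :=
  ppow_dvd_ppow_iff.mp ((IsUnit.dvd_mul_left hu).mp h)

lemma unit_add_nonunit {u z : ℤ_[p]} (hu : IsUnit u) (hz : ¬ IsUnit z) :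
    IsUnit (u + z) := by
  by_contra h
  have h2 : u ∈ nonunits ℤ_[p] := by
    have := IsLocalRing.nonunits_add (a := u + z) (b := -z) h (by simpa using hz)
    simpa using this
  exact h2 hu

/-- P1: one adjustment step. -/
lemma adjust (x : ℤ_[p]) {y u : ℤ_[p]} {k : ℕ} (hu : IsUnit u)
    (hy : y = u * (p : ℤ_[p]) ^ k) :
    ∃ (s e : _) (w : ℤ_[p]), IsUnit w ∧ e ≤ k ∧ x + s * y = w * (p : ℤ_[p]) ^ e ∧
      (p : ℤ_[p]) ^ e ∣ x := by
  by_cases hx : x = 0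
  · exact ⟨1, k, u, hu, le_rfl, by simp [hx, hy], by simp [hx]⟩
  · obtain ⟨v, j, hv, hxe⟩ := exists_unit_pow hx
    rcases le_or_gt j k with hjk | hkj
    · exact ⟨0, j, v, hv, hjk, by simp [hxe], by rw [hxe]; exact Dvd.dvd.mul_left dvd_rfl v⟩
    · have hpj : (p : ℤ_[p]) ^ j = (p : ℤ_[p]) ^ k * (p : ℤ_[p]) ^ (j - k) := by
        rw [← pow_add]; congr 1; omega
      refine ⟨1, k, u + v * (p : ℤ_[p]) ^ (j - k), ?_, le_rfl, ?_, ?_⟩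
      · refine unit_add_nonunit hu (fun hunit => p_not_unit (isUnit_of_dvd_unit ?_ hunit))
        exact Dvd.dvd.mul_left (dvd_pow_self _ (by omega)) v
      · rw [hxe, hy, hpj]; ring
      · rw [hxe, hpj]
        exact ⟨v * (p:ℤ_[p])^(j-k), by ring⟩

/-- The two-stage adjustment of the corner entries. -/
lemma adjust2 (c1 c2 : ℤ_[p]) {X τ uX u3 : ℤ_[p]} {e1 e3 : ℕ}
    (hXu : IsUnit uX) (hXe : X = uX * (p : ℤ_[p]) ^ e1)
    (h3 : IsUnit u3) (hτ : τ = u3 * (p : ℤ_[p]) ^ e3) :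
    ∃ (s s' t t' : ℤ_[p]) (e4 e5 : ℕ) (U1 U2 : ℤ_[p]), IsUnit U1 ∧ IsUnit U2 ∧
      e4 ≤ e3 ∧ e5 ≤ e3 ∧ e5 ≤ e4 ∧ e4 ≤ e5 + e1 ∧
      c2 + s * c1 + s' * τ = U2 * (p : ℤ_[p]) ^ e5 ∧
      c1 + t * (X * (c2 + s * c1 + s' * τ)) + t' * τ = U1 * (p : ℤ_[p]) ^ e4 := by
  have hτdvd : ∀ (e : ℕ), e ≤ e3 → ∀ r : ℤ_[p], (p:ℤ_[p])^e ∣ r * τ := by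
    intro e he r
    rw [hτ]
    exact Dvd.dvd.mul_left (Dvd.dvd.mul_left (pow_dvd_pow _ he) _) _
  by_cases hc1 : c1 = 0
  · -- c1 = 0 : take s = 0, t = 1
    obtain ⟨s', e5, U2, hU2, he5, hz2, -⟩ := adjust c2 h3 hτ
    set z2 := c2 + (0:ℤ_[p]) * c1 + s' * τ with hz2def
    have hz2' : z2 = U2 * (p:ℤ_[p])^e5 := by rw [hz2def]; simpa using hz2
    have hXz2 : X * z2 = (uX * U2) * (p:ℤ_[p])^(e1 + e5) := by
      rw [hz2', hXe, pow_add]; ring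
    obtain ⟨t', e4, U1, hU1, he4, hc1', hdvd⟩ := adjust (X * z2) h3 hτ
    have he4le : e4 ≤ e5 + e1 := by
      rw [hXz2] at hdvd
      have := le_of_ppow_dvd_unit_mul (hXu.mul hU2) hdvd
      omega
    have he5le : e5 ≤ e4 := by
      have h1 : (p:ℤ_[p])^e5 ∣ X * z2 := by
        rw [hXz2]; exact Dvd.dvd.mul_left (pow_dvd_pow _ (by omega)) _
      have hdd : (p:ℤ_[p])^e5 ∣ U1 * (p:ℤ_[p])^e4 := by
        rw [← hc1']
        exact dvd_add h1 (hτdvd e5 he5 t')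
      exact le_of_ppow_dvd_unit_mul hU1 hdd
    refine ⟨0, s', 1, t', e4, e5, U1, U2, hU1, hU2, he4, he5, he5le, he4le, hz2', ?_⟩
    rw [hc1]
    rw [hc1] at hz2def
    rw [← hz2def]
    simpa using hc1'
  · -- c1 ≠ 0
    obtain ⟨v, j, hv, hc1e⟩ := exists_unit_pow hc1
    obtain ⟨s, e', w', hw', he'j, hz1, hz1dvd⟩ := adjust c2 hv hc1e
    set z1 := c2 + s * c1 with hz1def
    obtain ⟨s', e5, U2, hU2, he5, hz2, hz2dvd⟩ := adjust z1 h3 hτ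
    have he5e' : e5 ≤ e' := by
      rw [hz1] at hz2dvd
      exact le_of_ppow_dvd_unit_mul hw' hz2dvd
    have he5c1 : (p:ℤ_[p])^e5 ∣ c1 := by
      rw [hc1e]
      exact Dvd.dvd.mul_left (pow_dvd_pow _ (by omega)) _
    set z2 := z1 + s' * τ with hz2def
    have hXz2 : X * z2 = (uX * U2) * (p:ℤ_[p])^(e1 + e5) := by
      rw [hz2, hXe, pow_add]; ring
    obtain ⟨t, e'', w'', hw'', he''le, hz3, hz3dvd⟩ := adjust c1 (hXu.mul hU2) hXz2
    set z3 := c1 + t * (X * z2) with hz3def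
    obtain ⟨t', e4, U1, hU1, he4, hc1', hc1'dvd⟩ := adjust z3 h3 hτ
    have he4le : e4 ≤ e5 + e1 := by
      rw [hz3] at hc1'dvd
      have := le_of_ppow_dvd_unit_mul hw'' hc1'dvd
      omega
    have he5le : e5 ≤ e4 := by
      have h1 : (p:ℤ_[p])^e5 ∣ z3 := by
        rw [hz3def]
        exact dvd_add he5c1 (by rw [hXz2]; exact Dvd.dvd.mul_left (Dvd.dvd.mul_left (pow_dvd_pow _ (by omega)) _) _)
      have hdd : (p:ℤ_[p])^e5 ∣ U1 * (p:ℤ_[p])^e4 := by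
        rw [← hc1']
        exact dvd_add h1 (hτdvd e5 he5 t')
      exact le_of_ppow_dvd_unit_mul hU1 hdd
    refine ⟨s, s', t, t', e4, e5, U1, U2, hU1, hU2, he4, he5, he5le, he4le, ?_, ?_⟩
    · rw [show c2 + s * c1 + s' * τ = z2 by rw [hz2def, hz1def]]
      exact hz2
    · rw [show c2 + s * c1 + s' * τ = z2 by rw [hz2def, hz1def]]
      rw [show c1 + t * (X * z2) + t' * τ = z3 + t' * τ by rw [hz3def]]
      exact hc1'

variable {p : ℕ} [Fact p.Prime]

/-- span of three vectors -/
noncomputable def T3 (g1 g2 g3 : Fin 3 → ℤ_[p]) : Submodule ℤ_[p] (Fin 3 → ℤ_[p]) :=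
  span ℤ_[p] ({g1, g2, g3} : Set (Fin 3 → ℤ_[p]))

lemma mem_T3 {v g1 g2 g3 : Fin 3 → ℤ_[p]} :
    v ∈ T3 g1 g2 g3 ↔ ∃ a b c : ℤ_[p], v = a • g1 + b • g2 + c • g3 := by
  rw [T3, mem_span_insert]
  constructor
  · rintro ⟨a, z, hz, rfl⟩
    obtain ⟨b, c, hbc⟩ := Submodule.mem_span_pair.mp hz
    exact ⟨a, b, c, by rw [← hbc]; abel⟩
  · rintro ⟨a, b, c, rfl⟩
    exact ⟨a, b • g2 + c • g3, Submodule.mem_span_pair.mpr ⟨b, c, rfl⟩, by abel⟩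

lemma T3_le {g1 g2 g3 : Fin 3 → ℤ_[p]} {Q : Submodule ℤ_[p] (Fin 3 → ℤ_[p])}
    (h1 : g1 ∈ Q) (h2 : g2 ∈ Q) (h3 : g3 ∈ Q) : T3 g1 g2 g3 ≤ Q := by
  rw [T3]; apply span_le.2
  rintro x hx
  simp only [Set.mem_insert_iff, Set.mem_singleton_iff] at hx
  rcases hx with rfl | rfl | rfl <;> assumption

lemma mem_T3_left (g1 g2 g3 : Fin 3 → ℤ_[p]) : g1 ∈ T3 g1 g2 g3 :=
  subset_span (by simp)
lemma mem_T3_mid (g1 g2 g3 : Fin 3 → ℤ_[p]) : g2 ∈ T3 g1 g2 g3 :=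
  subset_span (by simp)
lemma mem_T3_right (g1 g2 g3 : Fin 3 → ℤ_[p]) : g3 ∈ T3 g1 g2 g3 :=
  subset_span (by simp)

lemma span_rows (M : Matrix (Fin 3) (Fin 3) ℤ_[p]) :
    span ℤ_[p] (Set.range fun i => M i) = T3 (M 0) (M 1) (M 2) := by
  rw [T3]; congr 1
  ext v
  constructor
  · rintro ⟨i, rfl⟩; fin_cases i <;> simp
  · intro hv
    simp only [Set.mem_insert_iff, Set.mem_singleton_iff] at hv
    rcases hv with rfl | rfl | rfl
    exacts [⟨0, rfl⟩, ⟨1, rfl⟩, ⟨2, rfl⟩]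

lemma vm (v : Fin 3 → ℤ_[p]) (A : Matrix (Fin 3) (Fin 3) ℤ_[p]) (j : Fin 3) :
    (v ᵥ* A) j = v 0 * A 0 j + v 1 * A 1 j + v 2 * A 2 j := by
  simp [Matrix.vecMul, dotProduct, Fin.sum_univ_three]

lemma mulrow (A B : Matrix (Fin 3) (Fin 3) ℤ_[p]) (i : Fin 3) : (A * B) i = (A i) ᵥ* B := by
  funext j; simp [Matrix.mul_apply, Matrix.vecMul, dotProduct]

lemma map_T3 (A : Matrix (Fin 3) (Fin 3) ℤ_[p]) (g1 g2 g3 : Fin 3 → ℤ_[p]) :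
    (T3 g1 g2 g3).map A.vecMulLinear = T3 (g1 ᵥ* A) (g2 ᵥ* A) (g3 ᵥ* A) := by
  rw [T3, T3, Submodule.map_span]
  congr 1
  simp [Set.image_insert_eq, Matrix.vecMulLinear_apply]

lemma rows_span_mul {P Q : Matrix (Fin 3) (Fin 3) ℤ_[p]}
    (h : ∀ i, Q i ∈ T3 (P 0) (P 1) (P 2)) :
    ∃ C : Matrix (Fin 3) (Fin 3) ℤ_[p], C * P = Q := by
  choose a b c hv using fun i => mem_T3.mp (h i)
  refine ⟨Matrix.of (fun i => ![a i, b i, c i]), ?_⟩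
  ext i j
  rw [Matrix.mul_apply, Fin.sum_univ_three, hv i]
  simp

lemma eq_one_of_mul_eq_self {A N : Matrix (Fin 3) (Fin 3) ℤ_[p]} (hN : N.det ≠ 0)
    (h : A * N = N) : A = 1 := by
  have h0 : (A - 1) * N = 0 := by rw [sub_mul, one_mul, h, sub_self]
  have h1 : (A - 1) * N * N.adjugate = 0 := by rw [h0, Matrix.zero_mul]
  rw [Matrix.mul_assoc, Matrix.mul_adjugate, Matrix.mul_smul, Matrix.mul_one] at h1
  have h2 : A - 1 = 0 := by
    ext i j
    have := congrFun (congrFun h1 i) j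
    simp only [Matrix.smul_apply, smul_eq_mul, Matrix.zero_apply] at this
    rcases mul_eq_zero.mp this with h' | h'
    · exact absurd h' hN
    · simpa using h'
  rw [← sub_eq_zero]; exact h2

/-- Lemma A -/
lemma exists_gamma {P N : Matrix (Fin 3) (Fin 3) ℤ_[p]} (hN : N.det ≠ 0)
    (hsp : T3 (P 0) (P 1) (P 2) = T3 (N 0) (N 1) (N 2)) :
    ∃ γ : Matrix (Fin 3) (Fin 3) ℤ_[p], IsUnit γ.det ∧ γ * P = N := by
  have h1 : ∀ i, N i ∈ T3 (P 0) (P 1) (P 2) := by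
    rw [hsp]; intro i; fin_cases i
    exacts [mem_T3_left _ _ _, mem_T3_mid _ _ _, mem_T3_right _ _ _]
  have h2 : ∀ i, P i ∈ T3 (N 0) (N 1) (N 2) := by
    rw [← hsp]; intro i; fin_cases i
    exacts [mem_T3_left _ _ _, mem_T3_mid _ _ _, mem_T3_right _ _ _]
  obtain ⟨γ, hγ⟩ := rows_span_mul h1
  obtain ⟨δ, hδ⟩ := rows_span_mul h2
  have : (γ * δ) * N = N := by rw [Matrix.mul_assoc, hδ, hγ]
  have hγδ : γ * δ = 1 := eq_one_of_mul_eq_self hN this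
  have : γ.det * δ.det = 1 := by rw [← Matrix.det_mul, hγδ, Matrix.det_one]
  exact ⟨γ, IsUnit.of_mul_eq_one _ this, hγ⟩

set_option maxHeartbeats 1000000 in
lemma AutSet_mul {A B : Matrix (Fin 3) (Fin 3) ℤ_[p]}
    (hA : A ∈ AutSet p) (hB : B ∈ AutSet p) : A * B ∈ AutSet p := by
  obtain ⟨α, v1, v2, hα, rfl⟩ := hA
  obtain ⟨β, w1, w2, hβ, rfl⟩ := hB
  refine ⟨α * β, α 0 0 * w1 + α 0 1 * w2 + v1 * β.det,
    α 1 0 * w1 + α 1 1 * w2 + v2 * β.det, by rw [Matrix.det_mul]; exact hα.mul hβ, ?_⟩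
  ext i j
  fin_cases i <;> fin_cases j <;>
    simp [Matrix.mul_apply, Fin.sum_univ_three, Fin.sum_univ_two, Matrix.det_mul] <;> ring

set_option maxHeartbeats 1000000 in
lemma AutSet_det_isUnit {A : Matrix (Fin 3) (Fin 3) ℤ_[p]} (hA : A ∈ AutSet p) :
    IsUnit A.det := by
  obtain ⟨α, v1, v2, hα, rfl⟩ := hA
  rw [Matrix.det_fin_three]
  simp [Matrix.det_fin_two]
  convert (hα.mul hα) using 1
  rw [Matrix.det_fin_two]; ring

lemma T3_smul_units {l1 l2 l3 : ℤ_[p]} (h1 : IsUnit l1) (h2 : IsUnit l2) (h3 : IsUnit l3)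
    (n1 n2 n3 : Fin 3 → ℤ_[p]) :
    T3 (l1 • n1) (l2 • n2) (l3 • n3) = T3 n1 n2 n3 := by
  have k1 : (↑h1.unit⁻¹ : ℤ_[p]) * l1 = 1 := by
    have h := h1.unit.inv_mul; rwa [h1.unit_spec] at h
  have k2 : (↑h2.unit⁻¹ : ℤ_[p]) * l2 = 1 := by
    have h := h2.unit.inv_mul; rwa [h2.unit_spec] at h
  have k3 : (↑h3.unit⁻¹ : ℤ_[p]) * l3 = 1 := by
    have h := h3.unit.inv_mul; rwa [h3.unit_spec] at h
  apply le_antisymm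
  · exact T3_le (mem_T3.mpr ⟨l1, 0, 0, by simp⟩) (mem_T3.mpr ⟨0, l2, 0, by simp⟩)
      (mem_T3.mpr ⟨0, 0, l3, by simp⟩)
  · refine T3_le (mem_T3.mpr ⟨↑h1.unit⁻¹, 0, 0, ?_⟩) (mem_T3.mpr ⟨0, ↑h2.unit⁻¹, 0, ?_⟩)
      (mem_T3.mpr ⟨0, 0, ↑h3.unit⁻¹, ?_⟩) <;> simp [smul_smul, k1, k2, k3]

/-- Extra: choose an element of a list dividing all others. -/
lemma exists_dvd_all {p : ℕ} [Fact p.Prime] :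
    ∀ (l : List ℤ_[p]), l ≠ [] → ∃ x ∈ l, ∀ y ∈ l, x ∣ y := by
  intro l
  induction l with
  | nil => simp
  | cons a l ih =>
    intro _
    rcases eq_or_ne l [] with rfl | hl
    · exact ⟨a, by simp⟩
    · obtain ⟨x, hx, hall⟩ := ih hl
      rcases ValuationRing.dvd_total a x with h | h
      · refine ⟨a, by simp, ?_⟩
        intro y hy
        rcases List.mem_cons.mp hy with rfl | hy
        · exact dvd_rfl
        · exact h.trans (hall y hy)
      · refine ⟨x, List.mem_cons_of_mem _ hx, ?_⟩
        intro y hy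
        rcases List.mem_cons.mp hy with rfl | hy
        · exact h
        · exact hall y hy

lemma build_alpha {p : ℕ} [Fact p.Prime] {x y d : ℤ_[p]}
    (hx : d ∣ x) (hy : d ∣ y) (hcase : d = x ∨ d = y) :
    ∃ α : Matrix (Fin 2) (Fin 2) ℤ_[p], IsUnit α.det ∧
      x * α 0 0 + y * α 1 0 = 0 ∧ x * α 0 1 + y * α 1 1 = d := by
  rcases hcase with rfl | rfl
  · obtain ⟨b, hb⟩ := hy
    refine ⟨!![-b, 1; 1, 0], ?_, ?_, ?_⟩
    · rw [Matrix.det_fin_two_of]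
      simpa using isUnit_one.neg
    · simp [hb]
    · simp
  · obtain ⟨a, ha⟩ := hx
    refine ⟨!![1, 0; -a, 1], ?_, ?_, ?_⟩
    · rw [Matrix.det_fin_two_of]; simp
    · simp [ha]
    · simp

end Stmt10

open Stmt10 Matrix Submodule

set_option maxHeartbeats 2000000 in
/-- every double coset G·M·A, where M spans an ideal of finite
index of the Heisenberg Lie algebra, contains a matrix in the normal form
with diagonal (p^{e1+e2+e3}, p^{e2+e3}, p^{e3}), (1,2)-entry 0, (1,3)-entry
p^{e4}, (2,3)-entry p^{e5}, where e4 ≤ e3, e5 ≤ e3, e5 ≤ e4 ≤ e5 + e1. -/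
theorem stmt_10 (p : ℕ) [Fact p.Prime] (M : Matrix (Fin 3) (Fin 3) ℤ_[p])
    (hdet : M.det ≠ 0)
    (hideal : ∀ u v : Fin 3 → ℤ_[p],
        v ∈ Submodule.span ℤ_[p] (Set.range fun i => M i) →
        hbr u v ∈ Submodule.span ℤ_[p] (Set.range fun i => M i)) :
    ∃ e1 e2 e3 e4 e5 : ℕ, e4 ≤ e3 ∧ e5 ≤ e3 ∧ e5 ≤ e4 ∧ e4 ≤ e5 + e1 ∧
      ∃ γ a : Matrix (Fin 3) (Fin 3) ℤ_[p], IsUnit γ.det ∧ a ∈ AutSet p ∧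
        γ * M * a = !![(p : ℤ_[p]) ^ (e1 + e2 + e3), 0, (p : ℤ_[p]) ^ e4;
                       0, (p : ℤ_[p]) ^ (e2 + e3), (p : ℤ_[p]) ^ e5;
                       0, 0, (p : ℤ_[p]) ^ e3] := by
  classical
  -- Step 1: a minimal entry of the first two columns
  obtain ⟨d, hdmem, hddvd⟩ := exists_dvd_all
    [M 0 0, M 0 1, M 1 0, M 1 1, M 2 0, M 2 1] (by simp)
  simp only [List.mem_cons, List.not_mem_nil, or_false] at hdmem
  have hdd0 : ∀ i : Fin 3, d ∣ M i 0 := by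
    intro i; fin_cases i <;> exact hddvd _ (by simp)
  have hdd1 : ∀ i : Fin 3, d ∣ M i 1 := by
    intro i; fin_cases i <;> exact hddvd _ (by simp)
  have hd0 : d ≠ 0 := by
    rintro rfl
    exact hdet (Matrix.det_eq_zero_of_column_eq_zero 0 fun i => zero_dvd_iff.mp (hdd0 i))
  -- Step 2: the straightening 2x2 matrix
  have hαex : ∃ (i0 : Fin 3) (α : Matrix (Fin 2) (Fin 2) ℤ_[p]), IsUnit α.det ∧
      (M i0 0 * α 0 0 + M i0 1 * α 1 0 = 0) ∧ (M i0 0 * α 0 1 + M i0 1 * α 1 1 = d) ∧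
      (d = M i0 0 ∨ d = M i0 1) := by
    rcases hdmem with h|h|h|h|h|h
    · obtain ⟨α, h1, h2, h3⟩ := build_alpha (hdd0 0) (hdd1 0) (Or.inl h)
      exact ⟨0, α, h1, h2, h3, Or.inl h⟩
    · obtain ⟨α, h1, h2, h3⟩ := build_alpha (hdd0 0) (hdd1 0) (Or.inr h)
      exact ⟨0, α, h1, h2, h3, Or.inr h⟩
    · obtain ⟨α, h1, h2, h3⟩ := build_alpha (hdd0 1) (hdd1 1) (Or.inl h)
      exact ⟨1, α, h1, h2, h3, Or.inl h⟩
    · obtain ⟨α, h1, h2, h3⟩ := build_alpha (hdd0 1) (hdd1 1) (Or.inr h)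
      exact ⟨1, α, h1, h2, h3, Or.inr h⟩
    · obtain ⟨α, h1, h2, h3⟩ := build_alpha (hdd0 2) (hdd1 2) (Or.inl h)
      exact ⟨2, α, h1, h2, h3, Or.inl h⟩
    · obtain ⟨α, h1, h2, h3⟩ := build_alpha (hdd0 2) (hdd1 2) (Or.inr h)
      exact ⟨2, α, h1, h2, h3, Or.inr h⟩
  obtain ⟨i0, α, hαdet, hw0, hw1, hdor⟩ := hαex
  set D := α.det with hD
  set a0 : Matrix (Fin 3) (Fin 3) ℤ_[p] :=
    !![α 0 0, α 0 1, 0; α 1 0, α 1 1, 0; 0, 0, D] with ha0def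
  have ha0mem : a0 ∈ AutSet p := ⟨α, 0, 0, hαdet, rfl⟩
  set W : Fin 3 → Fin 3 → ℤ_[p] := fun i => (M i) ᵥ* a0 with hWdef
  have hW : ∀ i, W i = ![M i 0 * α 0 0 + M i 1 * α 1 0,
      M i 0 * α 0 1 + M i 1 * α 1 1, M i 2 * D] := by
    intro i
    have hWi : W i = M i ᵥ* a0 := by rw [hWdef]
    funext j
    rw [hWi, vm]
    fin_cases j <;> simp [ha0def, Matrix.vecHead, Matrix.vecTail]
  have hS' : Submodule.map a0.vecMulLinear (Submodule.span ℤ_[p] (Set.range fun i => M i))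
      = T3 (W 0) (W 1) (W 2) := by
    rw [span_rows, map_T3]
  have hWmem : ∀ i, W i ∈ T3 (W 0) (W 1) (W 2) := by
    intro i; fin_cases i
    exacts [mem_T3_left _ _ _, mem_T3_mid _ _ _, mem_T3_right _ _ _]
  obtain ⟨c2, hc2def⟩ : ∃ x : ℤ_[p], M i0 2 * D = x := ⟨_, rfl⟩
  have hw'v : W i0 = ![0, d, c2] := by rw [hW i0, hw0, hw1, hc2def]
  -- Step 3: row reduction using the second coordinate
  have hqex : ∀ i, ∃ qq, W i 1 = d * qq := by
    intro i
    have h : d ∣ W i 1 := by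
      rw [hW i]
      simpa using dvd_add ((hdd0 i).mul_right (α 0 1)) ((hdd1 i).mul_right (α 1 1))
    exact h
  choose q hq using hqex
  set k : Fin 3 → Fin 3 → ℤ_[p] := fun i => W i - q i • W i0 with hkdef
  have hk1 : ∀ i, k i 1 = 0 := by
    intro i
    have : k i 1 = W i 1 - q i * W i0 1 := by simp [hkdef]
    rw [this, hq i, hw'v]
    simp [mul_comm]
  have hk0 : ∀ i, k i 0 = W i 0 := by
    intro i
    have : k i 0 = W i 0 - q i * W i0 0 := by simp [hkdef]
    rw [this, hw'v]
    simp
  have hkmem : ∀ i, k i ∈ T3 (W 0) (W 1) (W 2) :=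
    fun i => sub_mem (hWmem i) (smul_mem _ _ (hWmem i0))
  -- Step 4: minimal first coordinate
  obtain ⟨d1, hd1mem, hd1dvd'⟩ := exists_dvd_all [k 0 0, k 1 0, k 2 0] (by simp)
  have hd1dvd : ∀ i, d1 ∣ k i 0 := by
    intro i; fin_cases i <;> exact hd1dvd' _ (by simp)
  have hi1ex : ∃ i1, k i1 0 = d1 := by
    simp only [List.mem_cons, List.not_mem_nil, or_false] at hd1mem
    rcases hd1mem with h|h|h
    exacts [⟨0, h.symm⟩, ⟨1, h.symm⟩, ⟨2, h.symm⟩]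
  obtain ⟨i1, hi1⟩ := hi1ex
  have hd1ne : d1 ≠ 0 := by
    rintro h0
    have hz : ∀ i, (M * a0) i 0 = 0 := by
      intro i
      have h1 : k i 0 = 0 := by
        have := hd1dvd i; rw [h0] at this; exact zero_dvd_iff.mp this
      have h2 : (M * a0) i 0 = W i 0 := by rw [mulrow]
      rw [h2, ← hk0 i, h1]
    have hdz : (M * a0).det = 0 := Matrix.det_eq_zero_of_column_eq_zero 0 hz
    rw [Matrix.det_mul] at hdz
    rcases mul_eq_zero.mp hdz with h | h
    · exact hdet h
    · exact (AutSet_det_isUnit ha0mem).ne_zero h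
  obtain ⟨c1, hc1def⟩ : ∃ x : ℤ_[p], k i1 2 = x := ⟨_, rfl⟩
  have hu_eq : k i1 = ![d1, 0, c1] := by
    funext j; fin_cases j
    · simpa using hi1
    · simpa using hk1 i1
    · simpa using hc1def
  have hd_d1 : d ∣ d1 := by
    rw [← hi1, hk0, hW i1]
    simpa using dvd_add ((hdd0 i1).mul_right (α 0 0)) ((hdd1 i1).mul_right (α 1 0))
  obtain ⟨u2, m2, hu2, hde⟩ := exists_unit_pow hd0
  obtain ⟨u1, m1, hu1, hd1e⟩ := exists_unit_pow hd1ne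
  have hm2m1 : m2 ≤ m1 := by
    refine le_of_ppow_dvd_unit_mul hu1 ?_
    rw [← hd1e]
    exact dvd_trans ⟨u2, by rw [hde]; ring⟩ hd_d1
  -- Step 5: further reduction using the first coordinate
  choose q' hq' using fun i => hd1dvd i
  set t : Fin 3 → Fin 3 → ℤ_[p] := fun i => k i - q' i • k i1 with htdef
  have ht0 : ∀ i, t i 0 = 0 := by
    intro i
    have h : t i 0 = k i 0 - q' i * k i1 0 := by simp [htdef]
    rw [h, hq' i, hi1]
    ring
  have ht1 : ∀ i, t i 1 = 0 := by
    intro i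
    have h : t i 1 = k i 1 - q' i * k i1 1 := by simp [htdef]
    rw [h, hk1, hk1]
    ring
  have htmem : ∀ i, t i ∈ T3 (W 0) (W 1) (W 2) :=
    fun i => sub_mem (hkmem i) (smul_mem _ _ (hkmem i1))
  -- Step 6: the z-part
  obtain ⟨τ, hτmem, hτdvd'⟩ := exists_dvd_all [t 0 2, t 1 2, t 2 2] (by simp)
  have hτdvd : ∀ i, τ ∣ t i 2 := by
    intro i; fin_cases i <;> exact hτdvd' _ (by simp)
  have hi2ex : ∃ i2, t i2 2 = τ := by
    simp only [List.mem_cons, List.not_mem_nil, or_false] at hτmem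
    rcases hτmem with h|h|h
    exacts [⟨0, h.symm⟩, ⟨1, h.symm⟩, ⟨2, h.symm⟩]
  obtain ⟨i2, hi2⟩ := hi2ex
  have htv : t i2 = ![0, 0, τ] := by
    funext j; fin_cases j
    · simpa using ht0 i2
    · simpa using ht1 i2
    · simpa using hi2
  choose sc hsc using fun i => hτdvd i
  -- Step 7: span equals the triangular triple
  have hWexp : ∀ i, W i = q' i • k i1 + q i • W i0 + sc i • t i2 := by
    intro i
    have h1 : t i = sc i • t i2 := by
      funext j; fin_cases j
      · rw [htv]; simpa using ht0 i
      · rw [htv]; simpa using ht1 i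
      · rw [htv]; simpa [mul_comm] using hsc i
    have h2 : k i = t i + q' i • k i1 := by rw [htdef]; simp
    have h3 : W i = k i + q i • W i0 := by rw [hkdef]; simp
    rw [h3, h2, h1]; abel
  have E1 : T3 (W 0) (W 1) (W 2) = T3 (k i1) (W i0) (t i2) := by
    apply le_antisymm
    · exact T3_le (mem_T3.mpr ⟨q' 0, q 0, sc 0, hWexp 0⟩)
        (mem_T3.mpr ⟨q' 1, q 1, sc 1, hWexp 1⟩)
        (mem_T3.mpr ⟨q' 2, q 2, sc 2, hWexp 2⟩)
    · exact T3_le (hkmem i1) (hWmem i0) (htmem i2)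
  -- Step 8: the ideal property provides the z-vector
  have hzS' : (![0,0,d*D] : Fin 3 → ℤ_[p]) ∈ T3 (k i1) (W i0) (t i2) := by
    rw [← E1, ← hS']
    refine Submodule.mem_map.2 ⟨![0,0,d], ?_, ?_⟩
    · rcases hdor with h | h
      · have hmem := hideal ![0,-1,0] (M i0) (Submodule.subset_span ⟨i0, rfl⟩)
        have hveq : hbr ![0,-1,0] (M i0) = ![0,0,d] := by
          funext j; fin_cases j <;> simp [hbr, ← h]
        rwa [hveq] at hmem
      · have hmem := hideal ![1,0,0] (M i0) (Submodule.subset_span ⟨i0, rfl⟩)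
        have hveq : hbr ![1,0,0] (M i0) = ![0,0,d] := by
          funext j; fin_cases j <;> simp [hbr, ← h]
        rwa [hveq] at hmem
    · funext j
      rw [Matrix.vecMulLinear_apply, vm]
      fin_cases j <;> simp [ha0def, Matrix.vecHead, Matrix.vecTail]
  obtain ⟨aa, bb, cc, habc⟩ := mem_T3.mp hzS'
  rw [hu_eq, hw'v, htv] at habc
  have haa : aa = 0 := by
    have h := congrFun habc 0
    simp at h
    rcases h with h | h
    · exact h
    · exact absurd h hd1ne
  have hbb : bb = 0 := by
    have h := congrFun habc 1
    simp at h
    rcases h with h | h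
    · exact h
    · exact absurd h hd0
  have hτdD : τ ∣ d * D := by
    have h := congrFun habc 2
    rw [haa, hbb] at h
    simp at h
    exact ⟨cc, by rw [h]; ring⟩
  have hτne : τ ≠ 0 := by
    rintro rfl
    exact mul_ne_zero hd0 hαdet.ne_zero (zero_dvd_iff.mp hτdD)
  have hτd : τ ∣ d := (IsUnit.dvd_mul_right hαdet).mp hτdD
  obtain ⟨u3, e3, hu3, hτe⟩ := exists_unit_pow hτne
  have he3m2 : e3 ≤ m2 := by
    refine le_of_ppow_dvd_unit_mul hu2 ?_
    rw [← hde]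
    exact dvd_trans ⟨u3, by rw [hτe]; ring⟩ hτd
  -- Step 9: X with d * X = d1
  obtain ⟨V2, hV2def⟩ : ∃ x : ℤ_[p], (↑hu2.unit⁻¹ : ℤ_[p]) = x := ⟨_, rfl⟩
  have hV2inv : u2 * V2 = 1 := by
    rw [← hV2def]
    have h := hu2.unit.mul_inv
    rwa [hu2.unit_spec] at h
  obtain ⟨X, hXdef⟩ : ∃ x : ℤ_[p], u1 * V2 * (p:ℤ_[p])^(m1 - m2) = x := ⟨_, rfl⟩
  have hXu : IsUnit (u1 * V2) := hu1.mul (by rw [← hV2def]; exact hu2.unit⁻¹.isUnit)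
  have hdX : d * X = d1 := by
    rw [hde, hd1e, ← hXdef]
    have hpow : (p:ℤ_[p])^m2 * (p:ℤ_[p])^(m1-m2) = (p:ℤ_[p])^m1 := by
      rw [← pow_add]; congr 1; omega
    calc u2 * (p:ℤ_[p])^m2 * (u1 * V2 * (p:ℤ_[p])^(m1-m2))
        = (u2 * V2) * u1 * ((p:ℤ_[p])^m2 * (p:ℤ_[p])^(m1-m2)) := by ring
      _ = u1 * (p:ℤ_[p])^m1 := by rw [hV2inv, hpow]; ring
  -- Step 10: adjust the corner entries
  obtain ⟨sA, sA', tA, tA', e4, e5, U1, U2, hU1, hU2, he4e3, he5e3, he54, he45, hC2, hC1⟩ :=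
    adjust2 c1 c2 hXu hXdef.symm hu3 hτe
  obtain ⟨C2v, hC2vdef⟩ : ∃ x : ℤ_[p], c2 + sA * c1 + sA' * τ = x := ⟨_, rfl⟩
  rw [hC2vdef] at hC2 hC1
  obtain ⟨C1v, hC1vdef⟩ : ∃ x : ℤ_[p], c1 + tA * (X * C2v) + tA' * τ = x := ⟨_, rfl⟩
  rw [hC1vdef] at hC1
  -- Step 11: the three further automorphisms
  obtain ⟨σ, hσdef⟩ : ∃ x : ℤ_[p], -(sA * X) = x := ⟨_, rfl⟩
  set a1 : Matrix (Fin 3) (Fin 3) ℤ_[p] := !![1,0,0; σ,1,0; 0,0,1] with ha1def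
  have ha1mem : a1 ∈ AutSet p := by
    refine ⟨!![1,0; σ,1], 0, 0, ?_, ?_⟩ <;> simp [Matrix.det_fin_two_of, ha1def]
  set a2 : Matrix (Fin 3) (Fin 3) ℤ_[p] := !![1,-tA,0; 0,1,0; 0,0,1] with ha2def
  have ha2mem : a2 ∈ AutSet p := by
    refine ⟨!![1,-tA; 0,1], 0, 0, ?_, ?_⟩ <;> simp [Matrix.det_fin_two_of, ha2def]
  obtain ⟨V1', hV1'def⟩ : ∃ x : ℤ_[p], (↑hU1.unit⁻¹ : ℤ_[p]) = x := ⟨_, rfl⟩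
  obtain ⟨V2', hV2'def⟩ : ∃ x : ℤ_[p], (↑hU2.unit⁻¹ : ℤ_[p]) = x := ⟨_, rfl⟩
  obtain ⟨ε1, hε1def⟩ : ∃ x : ℤ_[p], u2 * V2' = x := ⟨_, rfl⟩
  obtain ⟨ε2, hε2def⟩ : ∃ x : ℤ_[p], u1 * V1' = x := ⟨_, rfl⟩
  have hε1u : IsUnit ε1 := by
    rw [← hε1def, ← hV2'def]; exact hu2.mul hU2.unit⁻¹.isUnit
  have hε2u : IsUnit ε2 := by
    rw [← hε2def, ← hV1'def]; exact hu1.mul hU1.unit⁻¹.isUnit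
  have hU1inv : U1 * V1' = 1 := by
    rw [← hV1'def]
    have h := hU1.unit.mul_inv
    rwa [hU1.unit_spec] at h
  have hU2inv : U2 * V2' = 1 := by
    rw [← hV2'def]
    have h := hU2.unit.mul_inv
    rwa [hU2.unit_spec] at h
  set a3 : Matrix (Fin 3) (Fin 3) ℤ_[p] := !![ε1,0,0; 0,ε2,0; 0,0,ε1*ε2] with ha3def
  have ha3mem : a3 ∈ AutSet p := by
    refine ⟨!![ε1,0; 0,ε2], 0, 0, ?_, ?_⟩ <;> simp [Matrix.det_fin_two_of, ha3def]
    exact ⟨hε1u, hε2u⟩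
  -- Step 12: images of the generators under a1 and move A
  have hg1a1 : (![d1,0,c1] : Fin 3 → ℤ_[p]) ᵥ* a1 = ![d1,0,c1] := by
    funext j; rw [vm]; fin_cases j <;> simp [ha1def, Matrix.vecHead, Matrix.vecTail]
  have hg2a1 : (![0,d,c2] : Fin 3 → ℤ_[p]) ᵥ* a1 = ![d*σ, d, c2] := by
    funext j; rw [vm]; fin_cases j <;> simp [ha1def, Matrix.vecHead, Matrix.vecTail]
  have hg3a1 : (![0,0,τ] : Fin 3 → ℤ_[p]) ᵥ* a1 = ![0,0,τ] := by
    funext j; rw [vm]; fin_cases j <;> simp [ha1def, Matrix.vecHead, Matrix.vecTail]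
  have EqA : T3 ![d1,0,c1] ![d*σ,d,c2] ![0,0,τ]
      = T3 ![d1,0,c1] ![0,d,C2v] ![0,0,τ] := by
    apply le_antisymm
    · refine T3_le (mem_T3_left _ _ _) (mem_T3.mpr ⟨-sA, 1, -sA', ?_⟩) (mem_T3_right _ _ _)
      funext j; fin_cases j
      · simp [← hσdef]; first
        | linear_combination sA * hdX
        | linear_combination (-sA) * hdX
      · simp
      · simp [← hC2vdef]; ring
    · refine T3_le (mem_T3_left _ _ _) (mem_T3.mpr ⟨sA, 1, sA', ?_⟩) (mem_T3_right _ _ _)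
      funext j; fin_cases j
      · simp [← hσdef]
        first
        | linear_combination sA * hdX
        | linear_combination (-sA) * hdX
      · simp
      · simp [← hC2vdef]; ring
  -- Step 13: images under a2 and move B
  have hg1a2 : (![d1,0,c1] : Fin 3 → ℤ_[p]) ᵥ* a2 = ![d1, -(d1*tA), c1] := by
    funext j; rw [vm]; fin_cases j <;> simp [ha2def, Matrix.vecHead, Matrix.vecTail] <;> ring
  have hg2a2 : (![0,d,C2v] : Fin 3 → ℤ_[p]) ᵥ* a2 = ![0,d,C2v] := by
    funext j; rw [vm]; fin_cases j <;> simp [ha2def, Matrix.vecHead, Matrix.vecTail]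
  have hg3a2 : (![0,0,τ] : Fin 3 → ℤ_[p]) ᵥ* a2 = ![0,0,τ] := by
    funext j; rw [vm]; fin_cases j <;> simp [ha2def, Matrix.vecHead, Matrix.vecTail]
  have EqB : T3 ![d1,-(d1*tA),c1] ![0,d,C2v] ![0,0,τ]
      = T3 ![d1,0,C1v] ![0,d,C2v] ![0,0,τ] := by
    apply le_antisymm
    · refine T3_le (mem_T3.mpr ⟨1, -(tA * X), -tA', ?_⟩) (mem_T3_mid _ _ _) (mem_T3_right _ _ _)
      funext j; fin_cases j
      · simp
      · simp; first
        | linear_combination tA * hdX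
        | linear_combination (-tA) * hdX
      · simp [← hC1vdef]; ring
    · refine T3_le (mem_T3.mpr ⟨1, tA * X, tA', ?_⟩) (mem_T3_mid _ _ _) (mem_T3_right _ _ _)
      funext j; fin_cases j
      · simp
      · simp
        first
        | linear_combination tA * hdX
        | linear_combination (-tA) * hdX
      · simp [← hC1vdef]; ring
  -- Step 14: images under a3 and unit rescaling
  have hg1a3 : (![d1,0,C1v] : Fin 3 → ℤ_[p]) ᵥ* a3 = ![d1*ε1, 0, C1v*(ε1*ε2)] := by
    funext j; rw [vm]; fin_cases j <;> simp [ha3def, Matrix.vecHead, Matrix.vecTail] <;> ring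
  have hg2a3 : (![0,d,C2v] : Fin 3 → ℤ_[p]) ᵥ* a3 = ![0, d*ε2, C2v*(ε1*ε2)] := by
    funext j; rw [vm]; fin_cases j <;> simp [ha3def, Matrix.vecHead, Matrix.vecTail] <;> ring
  have hg3a3 : (![0,0,τ] : Fin 3 → ℤ_[p]) ᵥ* a3 = ![0,0, τ*(ε1*ε2)] := by
    funext j; rw [vm]; fin_cases j <;> simp [ha3def, Matrix.vecHead, Matrix.vecTail] <;> ring
  have hL1 : (![d1*ε1, 0, C1v*(ε1*ε2)] : Fin 3 → ℤ_[p])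
      = (u1*ε1) • ![(p:ℤ_[p])^m1, 0, (p:ℤ_[p])^e4] := by
    funext j; fin_cases j
    · simp; linear_combination ε1 * hd1e
    · simp
    · simp
      rw [hC1, ← hε1def, ← hε2def]
      linear_combination ((p:ℤ_[p])^e4 * u2 * V2' * u1) * hU1inv
  have hL2 : (![0, d*ε2, C2v*(ε1*ε2)] : Fin 3 → ℤ_[p])
      = (u2*ε2) • ![0, (p:ℤ_[p])^m2, (p:ℤ_[p])^e5] := by
    funext j; fin_cases j
    · simp
    · simp; linear_combination ε2 * hde
    · simp
      rw [hC2, ← hε1def, ← hε2def]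
      linear_combination ((p:ℤ_[p])^e5 * u2 * V1' * u1) * hU2inv
  have hL3 : (![0,0, τ*(ε1*ε2)] : Fin 3 → ℤ_[p])
      = (u3*(ε1*ε2)) • ![0, 0, (p:ℤ_[p])^e3] := by
    funext j; fin_cases j
    · simp
    · simp
    · simp; linear_combination (ε1*ε2) * hτe
  have hL1u : IsUnit (u1*ε1) := hu1.mul hε1u
  have hL2u : IsUnit (u2*ε2) := hu2.mul hε2u
  have hL3u : IsUnit (u3*(ε1*ε2)) := hu3.mul (hε1u.mul hε2u)
  -- Step 15: assembly
  set aT : Matrix (Fin 3) (Fin 3) ℤ_[p] := a0 * a1 * a2 * a3 with haTdef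
  have haTmem : aT ∈ AutSet p :=
    AutSet_mul (AutSet_mul (AutSet_mul ha0mem ha1mem) ha2mem) ha3mem
  have hmap : ∀ (A B : Matrix (Fin 3) (Fin 3) ℤ_[p]) (Q : Submodule ℤ_[p] (Fin 3 → ℤ_[p])),
      Q.map (A*B).vecMulLinear = (Q.map A.vecMulLinear).map B.vecMulLinear := by
    intro A B Q
    rw [← Submodule.map_comp]
    congr 1
    apply LinearMap.ext
    intro v
    simp [Matrix.vecMulLinear_apply, Matrix.vecMul_vecMul]
  have hspan : Submodule.map aT.vecMulLinear (Submodule.span ℤ_[p] (Set.range fun i => M i))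
      = T3 ![(p:ℤ_[p])^m1,0,(p:ℤ_[p])^e4] ![0,(p:ℤ_[p])^m2,(p:ℤ_[p])^e5] ![0,0,(p:ℤ_[p])^e3] := by
    rw [haTdef, hmap, hmap, hmap, hS', E1, hu_eq, hw'v, htv]
    rw [map_T3, hg1a1, hg2a1, hg3a1, EqA]
    rw [map_T3, hg1a2, hg2a2, hg3a2, EqB]
    rw [map_T3, hg1a3, hg2a3, hg3a3, hL1, hL2, hL3]
    exact T3_smul_units hL1u hL2u hL3u _ _ _
  set N : Matrix (Fin 3) (Fin 3) ℤ_[p] :=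
    !![(p:ℤ_[p])^m1, 0, (p:ℤ_[p])^e4; 0, (p:ℤ_[p])^m2, (p:ℤ_[p])^e5; 0,0,(p:ℤ_[p])^e3]
    with hNdef
  have hN0 : N 0 = ![(p:ℤ_[p])^m1,0,(p:ℤ_[p])^e4] := by
    funext j; fin_cases j <;> simp [hNdef, Matrix.vecHead, Matrix.vecTail]
  have hN1 : N 1 = ![0,(p:ℤ_[p])^m2,(p:ℤ_[p])^e5] := by
    funext j; fin_cases j <;> simp [hNdef, Matrix.vecHead, Matrix.vecTail]
  have hN2 : N 2 = ![0,0,(p:ℤ_[p])^e3] := by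
    funext j; fin_cases j <;> simp [hNdef, Matrix.vecHead, Matrix.vecTail]
  have hNdet : N.det ≠ 0 := by
    have h : N.det = (p:ℤ_[p])^m1 * (p:ℤ_[p])^m2 * (p:ℤ_[p])^e3 := by
      rw [Matrix.det_fin_three]; simp [hNdef, Matrix.vecHead, Matrix.vecTail]
      try ring
    rw [h]
    exact mul_ne_zero (mul_ne_zero (ppow_ne_zero m1) (ppow_ne_zero m2)) (ppow_ne_zero e3)
  have hrowsa : T3 ((M*aT) 0) ((M*aT) 1) ((M*aT) 2) = T3 (N 0) (N 1) (N 2) := by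
    rw [mulrow, mulrow, mulrow, hN0, hN1, hN2, ← map_T3, ← span_rows, hspan]
  obtain ⟨γ, hγu, hγ⟩ := exists_gamma hNdet hrowsa
  refine ⟨m1 - m2, m2 - e3, e3, e4, e5, he4e3, he5e3, he54, he45, γ, aT, hγu, haTmem, ?_⟩
  have hE1 : m1 - m2 + (m2 - e3) + e3 = m1 := by omega
  have hE2 : m2 - e3 + e3 = m2 := by omega
  rw [hE1, hE2, Matrix.mul_assoc, hγ]
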